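/- Let n ≥ 1 and let Z_1, …, Z_n be real numbers with |Z_t| ≤ M for all t, where M ≥ 0 and nM ≤ 1. Then |∏_{t=1}^n (1 + Z_t) − 1 − ∑_{t=1}^n Z_t − ∑_{1 ≤ t < s ≤ n} Z_t Z_s| ≤ n³M³. -/

import Mathlib

open Finset

lemma aux_two_pow_le_factorial (k : ℕ) : 2 ^ (k - 1) ≤ Nat.factorial k := by
  induction k with
  | zero => simp
  | succ k ih =>
    rcases Nat.eq_zero_or_pos k with rfl | hk
    · simp
    · have hk1 : k - 1 + 1 = k := Nat.succ_pred_eq_of_pos hk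
      have h2 : 2 ^ k = 2 * 2 ^ (k - 1) := by
        rw [mul_comm, ← pow_succ, hk1]
      calc 2 ^ (k + 1 - 1) = 2 * 2 ^ (k - 1) := by rw [Nat.add_sub_cancel, h2]
        _ ≤ (k + 1) * Nat.factorial k := Nat.mul_le_mul (by omega) ih
        _ = Nat.factorial (k + 1) := (Nat.factorial_succ k).symm
open Finset

lemma aux_pairsum (n : ℕ) (Z : Fin n → ℝ) :
    ∑ t ∈ (univ : Finset (Fin n)).powersetCard 2, ∏ i ∈ t, Z i
      = ∑ p ∈ Finset.univ.filter (fun p : Fin n × Fin n => p.1 < p.2), Z p.1 * Z p.2 := by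
  refine (Finset.sum_bij (fun p _ => ({p.1, p.2} : Finset (Fin n))) ?_ ?_ ?_ ?_).symm
  · intro p hp
    simp only [mem_filter, mem_univ, true_and] at hp
    rw [mem_powersetCard_univ]
    rw [Finset.card_insert_of_notMem (by simp [hp.ne]), card_singleton]
  · intro p hp q hq h
    simp only [mem_filter, mem_univ, true_and] at hp hq
    have h1 : p.1 ∈ ({q.1, q.2} : Finset (Fin n)) := by rw [← h]; simp
    have h2 : p.2 ∈ ({q.1, q.2} : Finset (Fin n)) := by rw [← h]; simp
    simp only [mem_insert, mem_singleton] at h1 h2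
    simp only [Prod.ext_iff, Fin.ext_iff, Fin.lt_def] at *
    omega
  · intro t ht
    rw [mem_powersetCard_univ] at ht
    obtain ⟨a, b, hab, rfl⟩ := Finset.card_eq_two.mp ht
    rcases lt_or_gt_of_ne hab with h | h
    · exact ⟨(a, b), by simp [h], rfl⟩
    · exact ⟨(b, a), by simp [h], by rw [Finset.pair_comm]⟩
  · intro p hp
    simp only [mem_filter, mem_univ, true_and] at hp
    rw [Finset.prod_pair hp.ne]

open Finset

lemma aux_choose_bound (n k : ℕ) (M : ℝ) (hM : 0 ≤ M) (hnM : (n : ℝ) * M ≤ 1)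
    (hk : 3 ≤ k) :
    (n.choose k : ℝ) * M ^ k ≤ (n : ℝ) ^ 3 * M ^ 3 * (1 / 2) ^ (k - 1) := by
  have hfac : (0 : ℝ) < (Nat.factorial k : ℝ) := by positivity
  have h1 : (n.choose k : ℝ) * (Nat.factorial k : ℝ) ≤ (n : ℝ) ^ k := by
    have := Nat.descFactorial_le_pow n k
    rw [Nat.descFactorial_eq_factorial_mul_choose] at this
    calc (n.choose k : ℝ) * (Nat.factorial k : ℝ)
        = ((Nat.factorial k * n.choose k : ℕ) : ℝ) := by push_cast; ring
      _ ≤ ((n ^ k : ℕ) : ℝ) := by exact_mod_cast this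
      _ = (n : ℝ) ^ k := by push_cast; ring
  have hnM0 : 0 ≤ (n : ℝ) * M := by positivity
  have h2 : ((n : ℝ) * M) ^ k ≤ ((n : ℝ) * M) ^ 3 :=
    pow_le_pow_of_le_one hnM0 hnM hk
  have h3 : (2 : ℝ) ^ (k - 1) ≤ (Nat.factorial k : ℝ) := by
    exact_mod_cast aux_two_pow_le_factorial k
  have h4 : (n.choose k : ℝ) * M ^ k ≤ ((n : ℝ) * M) ^ k / (Nat.factorial k : ℝ) := by
    rw [le_div_iff₀ hfac, mul_pow]
    calc (n.choose k : ℝ) * M ^ k * (Nat.factorial k : ℝ)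
        = (n.choose k : ℝ) * (Nat.factorial k : ℝ) * M ^ k := by ring
      _ ≤ (n : ℝ) ^ k * M ^ k := by
          exact mul_le_mul_of_nonneg_right h1 (by positivity)
  calc (n.choose k : ℝ) * M ^ k ≤ ((n : ℝ) * M) ^ k / (Nat.factorial k : ℝ) := h4
    _ ≤ ((n : ℝ) * M) ^ 3 / (2 : ℝ) ^ (k - 1) := by
        apply div_le_div₀ (by positivity) h2 (by positivity) h3
    _ = (n : ℝ) ^ 3 * M ^ 3 * (1 / 2) ^ (k - 1) := by
        rw [mul_pow, div_pow, one_pow]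
        ring
/-- second-order expansion of a compounded product: if `|Z t| ≤ M` for
all `t`, `M ≥ 0` and `nM ≤ 1`, then the remainder beyond the first and second
elementary symmetric terms is bounded by `n³M³`. -/
theorem stmt4 (n : ℕ) (hn : 1 ≤ n) (M : ℝ) (hM : 0 ≤ M) (hnM : (n : ℝ) * M ≤ 1)
    (Z : Fin n → ℝ) (hZ : ∀ t, |Z t| ≤ M) :
    |(∏ t, (1 + Z t)) - 1 - (∑ t, Z t)
        - ∑ p ∈ Finset.univ.filter (fun p : Fin n × Fin n => p.1 < p.2), Z p.1 * Z p.2|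
      ≤ (n : ℝ) ^ 3 * M ^ 3 := by
  classical
  set A : ℕ → ℝ := fun k => ∑ t ∈ (univ : Finset (Fin n)).powersetCard k, ∏ i ∈ t, Z i with hA
  have hexp : (∏ t, (1 + Z t)) = ∑ k ∈ range (n + 3), A k := by
    have h1 : (∏ t, (1 + Z t)) = ∑ t ∈ (univ : Finset (Fin n)).powerset, ∏ i ∈ t, Z i := by
      calc (∏ t, (1 + Z t)) = ∏ t, (Z t + 1) := by simp_rw [add_comm]
        _ = ∑ t ∈ (univ : Finset (Fin n)).powerset, ∏ i ∈ t, Z i := by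
            simpa using Finset.prod_add Z (fun _ => (1 : ℝ)) univ
    rw [h1, Finset.sum_powerset]
    refine Finset.sum_subset ?_ ?_
    · intro k hk
      simp only [Finset.mem_range, card_univ, Fintype.card_fin] at hk ⊢
      omega
    · intro k hk hk'
      have hnk : (univ : Finset (Fin n)).card < k := by
        simp only [Finset.mem_range, card_univ, Fintype.card_fin] at hk hk' ⊢
        omega
      show (∑ t ∈ (univ : Finset (Fin n)).powersetCard k, ∏ i ∈ t, Z i) = 0
      rw [Finset.powersetCard_eq_empty.mpr hnk, Finset.sum_empty]
  have hA0 : A 0 = 1 := by simp [hA]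
  have hA1 : A 1 = ∑ t, Z t := by
    simp [hA, Finset.powersetCard_one, Finset.sum_map]
  have hA2 : A 2 = ∑ p ∈ Finset.univ.filter (fun p : Fin n × Fin n => p.1 < p.2),
      Z p.1 * Z p.2 := aux_pairsum n Z
  have hsplit : ∑ k ∈ range (n + 3), A k
      = (A 0 + A 1 + A 2) + ∑ k ∈ Finset.Ico 3 (n + 3), A k := by
    rw [Finset.range_eq_Ico, ← Finset.sum_Ico_consecutive A (by omega : 0 ≤ 3)
      (by omega : 3 ≤ n + 3), ← Finset.range_eq_Ico]
    congr 1
    simp [Finset.sum_range_succ]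
  have hkey : (∏ t, (1 + Z t)) - 1 - (∑ t, Z t)
      - (∑ p ∈ Finset.univ.filter (fun p : Fin n × Fin n => p.1 < p.2), Z p.1 * Z p.2)
      = ∑ k ∈ Finset.Ico 3 (n + 3), A k := by
    rw [hexp, hsplit, hA0, hA1, hA2]; ring
  rw [hkey]
  have hAk : ∀ k ∈ Finset.Ico 3 (n + 3), |A k| ≤ (n : ℝ) ^ 3 * M ^ 3 * (1 / 2) ^ (k - 1) := by
    intro k hk
    have hk3 : 3 ≤ k := (Finset.mem_Ico.mp hk).1
    have h1 : |A k| ≤ ∑ t ∈ (univ : Finset (Fin n)).powersetCard k, M ^ k := by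
      refine (Finset.abs_sum_le_sum_abs _ _).trans (Finset.sum_le_sum ?_)
      intro t ht
      rw [Finset.mem_powersetCard_univ] at ht
      rw [Finset.abs_prod, ← ht, ← Finset.prod_const]
      exact Finset.prod_le_prod (fun i _ => abs_nonneg _) (fun i _ => hZ i)
    have h2 : ∑ t ∈ (univ : Finset (Fin n)).powersetCard k, M ^ k
        = (n.choose k : ℝ) * M ^ k := by
      rw [Finset.sum_const, Finset.card_powersetCard, card_univ, Fintype.card_fin,
        nsmul_eq_mul]
    exact h1.trans (h2.le.trans (aux_choose_bound n k M hM hnM hk3))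
  calc |∑ k ∈ Finset.Ico 3 (n + 3), A k|
      ≤ ∑ k ∈ Finset.Ico 3 (n + 3), |A k| := Finset.abs_sum_le_sum_abs _ _
    _ ≤ ∑ k ∈ Finset.Ico 3 (n + 3), (n : ℝ) ^ 3 * M ^ 3 * (1 / 2) ^ (k - 1) :=
        Finset.sum_le_sum hAk
    _ = (n : ℝ) ^ 3 * M ^ 3 * ∑ k ∈ Finset.Ico 3 (n + 3), ((1 : ℝ) / 2) ^ (k - 1) := by
        rw [Finset.mul_sum]
    _ ≤ (n : ℝ) ^ 3 * M ^ 3 * 1 := by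
        refine mul_le_mul_of_nonneg_left ?_ (by positivity)
        have hre : ∑ k ∈ Finset.Ico 3 (n + 3), ((1 : ℝ) / 2) ^ (k - 1)
            = ∑ i ∈ range n, ((1 : ℝ) / 2) ^ (i + 2) := by
          rw [Finset.sum_Ico_eq_sum_range]
          simp only [Nat.add_sub_cancel]
          refine Finset.sum_congr rfl (fun i _ => by congr 1; omega)
        rw [hre]
        have : ∑ i ∈ range n, ((1 : ℝ) / 2) ^ (i + 2)
            = (1 / 4) * ∑ i ∈ range n, ((1 : ℝ) / 2) ^ i := by
          rw [Finset.mul_sum]; refine Finset.sum_congr rfl (fun i _ => by ring)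
        rw [this]
        nlinarith [sum_geometric_two_le n]
    _ = (n : ℝ) ^ 3 * M ^ 3 := mul_one _
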